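/- arXiv:2105.14830 — 2 statements merged into one kernel-verified Lean document; each statement's English description precedes it below -/
import Mathlib

section
/- The function f(x) = -e^{1/x} Ei(-1/x) is concave on (0, ∞). -/
open MeasureTheory Set Real

/-- The exponential integral: for `z < 0`, `Ei z = -∫_{-z}^∞ e^{-t}/t dt`. -/
noncomputable def Ei (z : ℝ) : ℝ := -(∫ t in Set.Ioi (-z), Real.exp (-t) / t)

/-- `f x = -e^{1/x} Ei(-1/x)`. -/
noncomputable def f (x : ℝ) : ℝ := -Real.exp (1/x) * Ei (-(1/x))

lemma trans_Ioi (g : ℝ → ℝ) (y : ℝ) :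
    (∫ t in Ioi y, g t) = ∫ s in Ioi (0:ℝ), g (s + y) := by
  rw [← integral_indicator measurableSet_Ioi, ← integral_indicator measurableSet_Ioi,
    ← integral_add_right_eq_self (fun t => (Ioi y).indicator g t) y]
  congr 1
  ext s
  have : y < s + y ↔ 0 < s := by constructor <;> intro h <;> linarith
  simp [indicator_apply, this]

/-- The integrand in the representation. -/
noncomputable def G (x s : ℝ) : ℝ := Real.exp (-s) * (x / (s * x + 1))

lemma G_integrable {x : ℝ} (hx : 0 < x) : IntegrableOn (G x) (Ioi 0) := by
  have hint : IntegrableOn (fun s => x * Real.exp (-s)) (Ioi 0) := by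
    have := (exp_neg_integrableOn_Ioi 0 one_pos).const_mul x
    simpa [IntegrableOn] using this
  apply Integrable.mono' hint
  · apply ContinuousOn.aestronglyMeasurable _ measurableSet_Ioi
    apply ContinuousOn.mul (Continuous.continuousOn (by continuity))
    apply ContinuousOn.div continuousOn_const
    · exact Continuous.continuousOn (by continuity)
    · intro s hs
      have : 0 < s := hs
      nlinarith
  · rw [ae_restrict_iff' measurableSet_Ioi]
    filter_upwards with s hs
    have hs : 0 < s := hs
    have hd : 0 < s * x + 1 := by nlinarith
    have h1 : x / (s * x + 1) ≤ x := by
      rw [div_le_iff₀ hd]; nlinarith [mul_pos hs (mul_pos hx hx)]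
    have h0 : 0 ≤ x / (s * x + 1) := by positivity
    simp only [G]
    rw [Real.norm_eq_abs, abs_of_nonneg (mul_nonneg (Real.exp_nonneg _) h0)]
    calc Real.exp (-s) * (x / (s * x + 1)) ≤ Real.exp (-s) * x :=
          mul_le_mul_of_nonneg_left h1 (Real.exp_nonneg _)
      _ = x * Real.exp (-s) := mul_comm _ _

lemma f_rep {x : ℝ} (hx : 0 < x) : f x = ∫ s in Ioi (0:ℝ), G x s := by
  have hx' : 0 < 1 / x := by positivity
  have h1 : f x = Real.exp (1/x) * ∫ t in Ioi (1/x), Real.exp (-t) / t := by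
    simp [f, Ei]
  rw [h1, trans_Ioi (fun t => Real.exp (-t) / t) (1/x), ← integral_const_mul]
  apply setIntegral_congr_fun measurableSet_Ioi
  intro s hs
  have hs : 0 < s := hs
  have hd : 0 < s * x + 1 := by nlinarith
  have : Real.exp (1/x) * Real.exp (-(s + 1/x)) = Real.exp (-s) := by
    rw [← Real.exp_add]; ring_nf
  simp only [G]
  rw [← mul_div_assoc, this]
  rw [mul_div_assoc']
  rw [div_eq_div_iff (by positivity) hd.ne']
  field_simp

/-- `f` is concave on `(0,∞)`. -/
theorem stmt_5 : ConcaveOn ℝ (Set.Ioi 0) f := by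
  refine ⟨convex_Ioi 0, ?_⟩
  intro a ha b hb p q hp hq hpq
  have ha : (0:ℝ) < a := ha
  have hb : (0:ℝ) < b := hb
  have hq' : q = 1 - p := by linarith
  subst hq'
  have hc : 0 < p * a + (1 - p) * b := by
    rcases eq_or_lt_of_le hp with h | h
    · simp [← h]; linarith
    · nlinarith
  simp only [smul_eq_mul]
  rw [f_rep ha, f_rep hb, f_rep hc, ← integral_const_mul, ← integral_const_mul,
    ← integral_add ((G_integrable ha).const_mul p) ((G_integrable hb).const_mul (1-p))]
  apply setIntegral_mono_on
  · exact ((G_integrable ha).const_mul p).add ((G_integrable hb).const_mul (1-p))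
  · exact G_integrable hc
  · exact measurableSet_Ioi
  · intro s hs
    have hs : 0 < s := hs
    have hA : 0 < s * a + 1 := by nlinarith
    have hB : 0 < s * b + 1 := by nlinarith
    have hC : 0 < s * (p * a + (1 - p) * b) + 1 := by nlinarith
    have key : (p * a + (1 - p) * b) / (s * (p * a + (1 - p) * b) + 1)
        - (p * (a / (s * a + 1)) + (1 - p) * (b / (s * b + 1)))
        = p * (1 - p) * s * (a - b) ^ 2 / ((s * a + 1) * (s * b + 1) * (s * (p * a + (1 - p) * b) + 1)) := by
      field_simp
      ring
    have hfr : p * (a / (s * a + 1)) + (1 - p) * (b / (s * b + 1))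
        ≤ (p * a + (1 - p) * b) / (s * (p * a + (1 - p) * b) + 1) := by
      have h0 : 0 ≤ p * (1 - p) * s * (a - b) ^ 2 / ((s * a + 1) * (s * b + 1) * (s * (p * a + (1 - p) * b) + 1)) := by
        have : 0 ≤ 1 - p := hq
        positivity
      linarith
    simp only [G]
    have := mul_le_mul_of_nonneg_left hfr (Real.exp_nonneg (-s))
    linarith
end

section
/- Any nonnegative weighted sum of functions of the form η ↦ f(c_m · η_m), where f(x) = -e^{1/x} Ei(-1/x) and c_m > 0, is concave on the positive orthant; consequently, the objective η ↦ Σ_{m=1}^M f(c_m η_m) of Problem 3 is a concave function on {η : 0 ≤ η_m ≤ 1}. -/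
open MeasureTheory

/-- `f x = -e^{1/x} Ei(-1/x)`, extended continuously by `f(0) = 0` to `x ≤ 0`. -/
noncomputable def fext (x : ℝ) : ℝ :=
  if 0 < x then -Real.exp (1/x) * Ei (-(1/x)) else 0

noncomputable def phi (x s : ℝ) : ℝ := x * Real.exp (-s) / (x * s + 1)

lemma integrable_phi {x : ℝ} (hx : 0 ≤ x) : IntegrableOn (phi x) (Set.Ioi 0) := by
  have hbase : IntegrableOn (fun s : ℝ => x * Real.exp (-1 * s)) (Set.Ioi 0) :=
    (exp_neg_integrableOn_Ioi 0 one_pos).const_mul x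
  refine Integrable.mono hbase ?_ ?_
  · refine (ContinuousOn.aestronglyMeasurable ?_ measurableSet_Ioi)
    apply ContinuousOn.div
    · exact (continuous_const.mul (Real.continuous_exp.comp continuous_neg)).continuousOn
    · exact (continuous_const.mul continuous_id |>.add continuous_const).continuousOn
    · intro s hs
      have hs' : (0:ℝ) < s := hs
      nlinarith [mul_nonneg hx hs'.le]
  · filter_upwards [ae_restrict_mem measurableSet_Ioi] with s hs
    have hs' : (0:ℝ) < s := hs
    have hd : (1:ℝ) ≤ x * s + 1 := by nlinarith [mul_nonneg hx hs'.le]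
    have hnum : 0 ≤ x * Real.exp (-s) := mul_nonneg hx (Real.exp_pos _).le
    simp only [phi, Real.norm_eq_abs, neg_one_mul]
    rw [abs_of_nonneg (div_nonneg hnum (by linarith)), abs_of_nonneg hnum]
    exact div_le_self hnum hd

lemma fext_eq {x : ℝ} (hx : 0 ≤ x) : fext x = ∫ s in Set.Ioi (0:ℝ), phi x s := by
  rcases eq_or_lt_of_le hx with rfl | hx
  · simp [fext, phi]
  · have h1 : fext x = Real.exp (1/x) * ∫ t in Set.Ioi (1/x), Real.exp (-t) / t := by
      unfold fext Ei
      rw [if_pos hx, neg_neg, neg_mul_neg]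
    have hshift : (∫ t in Set.Ioi (1/x), Real.exp (-t) / t)
        = ∫ s in Set.Ioi (0:ℝ), Real.exp (-(s + 1/x)) / (s + 1/x) := by
      calc (∫ t in Set.Ioi (1/x), Real.exp (-t) / t)
          = ∫ t, (Set.Ioi (1/x)).indicator (fun t => Real.exp (-t) / t) t :=
            (integral_indicator measurableSet_Ioi).symm
        _ = ∫ s, (Set.Ioi (1/x)).indicator (fun t => Real.exp (-t) / t) (s + 1/x) :=
            (integral_add_right_eq_self _ (1/x)).symm
        _ = ∫ s, (Set.Ioi (0:ℝ)).indicator (fun s => Real.exp (-(s + 1/x)) / (s + 1/x)) s := by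
            congr 1
            ext s
            by_cases h : 0 < s
            · rw [Set.indicator_of_mem (Set.mem_Ioi.2 (by linarith)),
                Set.indicator_of_mem (Set.mem_Ioi.2 h)]
            · rw [Set.indicator_of_notMem (by simp only [Set.mem_Ioi]; intro hh; exact h (by linarith)),
                Set.indicator_of_notMem (by simpa using h)]
        _ = ∫ s in Set.Ioi (0:ℝ), Real.exp (-(s + 1/x)) / (s + 1/x) :=
            integral_indicator measurableSet_Ioi
    rw [h1, hshift, ← integral_const_mul]
    refine setIntegral_congr_fun measurableSet_Ioi ?_
    intro s hs
    have hs' : (0:ℝ) < s := hs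
    have hd1 : (0:ℝ) < s + 1/x := by positivity
    have hd2 : (0:ℝ) < x * s + 1 := by positivity
    have he : Real.exp (1/x) * Real.exp (-(s + 1/x)) = Real.exp (-s) := by
      rw [← Real.exp_add]; ring_nf
    show Real.exp (1/x) * (Real.exp (-(s + 1/x)) / (s + 1/x)) = phi x s
    unfold phi
    rw [← mul_div_assoc, he, div_eq_div_iff hd1.ne' hd2.ne']
    field_simp

lemma phi_concave_pt {x y l m s : ℝ} (hx : 0 ≤ x) (hy : 0 ≤ y) (hl : 0 ≤ l) (hm : 0 ≤ m)
    (hlm : l + m = 1) (hs : 0 < s) :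
    l * phi x s + m * phi y s ≤ phi (l * x + m * y) s := by
  unfold phi
  set u := l * x + m * y with hu
  have hu0 : 0 ≤ u := by positivity
  have hdx : (0:ℝ) < x * s + 1 := by positivity
  have hdy : (0:ℝ) < y * s + 1 := by positivity
  have hdu : (0:ℝ) < u * s + 1 := by positivity
  have he : (0:ℝ) < Real.exp (-s) := Real.exp_pos _
  rw [mul_div_assoc', mul_div_assoc', div_add_div _ _ hdx.ne' hdy.ne',
    div_le_div_iff₀ (mul_pos hdx hdy) hdu]
  have hm' : m = 1 - l := by linarith
  subst hm'
  have key : u * Real.exp (-s) * ((x*s+1)*(y*s+1)) -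
      (l*(x*Real.exp (-s))*(y*s+1) + (x*s+1)*((1-l)*(y*Real.exp (-s)))) * (u*s+1)
      = Real.exp (-s) * (l*(1-l)*s*(x-y)^2) := by rw [hu]; ring
  nlinarith [key, mul_nonneg he.le
    (mul_nonneg (mul_nonneg (mul_nonneg hl hm) hs.le) (sq_nonneg (x - y)))]

lemma fext_concave : ConcaveOn ℝ (Set.Ici (0:ℝ)) fext := by
  refine ⟨convex_Ici 0, ?_⟩
  intro x hx y hy l m hl hm hlm
  have hx' : (0:ℝ) ≤ x := hx
  have hy' : (0:ℝ) ≤ y := hy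
  have hu : (0:ℝ) ≤ l * x + m * y := by positivity
  simp only [smul_eq_mul]
  rw [fext_eq hx', fext_eq hy', fext_eq hu]
  rw [← integral_const_mul, ← integral_const_mul,
    ← integral_add ((integrable_phi hx').const_mul l) ((integrable_phi hy').const_mul m)]
  refine setIntegral_mono_on
    (((integrable_phi hx').const_mul l).add ((integrable_phi hy').const_mul m))
    (integrable_phi hu) measurableSet_Ioi ?_
  intro s hs
  exact phi_concave_pt hx' hy' hl hm hlm hs

lemma concaveOn_finset_sum {E : Type*} [AddCommGroup E] [Module ℝ E] {ι : Type*}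
    (t : Finset ι) {S : Set E} (hS : Convex ℝ S) (f : ι → E → ℝ)
    (h : ∀ i ∈ t, ConcaveOn ℝ S (f i)) :
    ConcaveOn ℝ S (fun x => ∑ i ∈ t, f i x) := by
  classical
  induction t using Finset.induction_on with
  | empty => simpa using concaveOn_const 0 hS
  | insert _ _ hnotmem ih =>
    rename_i i t'
    simp only [Finset.sum_insert hnotmem]
    exact (h i (Finset.mem_insert_self i t')).add
      (ih fun j hj => h j (Finset.mem_insert_of_mem hj))

lemma term_concave {M : ℕ} {S : Set (Fin M → ℝ)} (hS : Convex ℝ S)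
    (hSsub : ∀ η ∈ S, ∀ m, 0 ≤ η m) {cm : ℝ} (hcm : 0 < cm) (m : Fin M) :
    ConcaveOn ℝ S (fun η => fext (cm * η m)) := by
  refine ⟨hS, ?_⟩
  intro p hp q hq l mu hl hmu hlm
  have h := fext_concave.2 (Set.mem_Ici.2 (mul_nonneg hcm.le (hSsub p hp m)))
    (Set.mem_Ici.2 (mul_nonneg hcm.le (hSsub q hq m))) hl hmu hlm
  have harg : cm * (l • p + mu • q) m = l • (cm * p m) + mu • (cm * q m) := by
    simp only [Pi.add_apply, Pi.smul_apply, smul_eq_mul]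
    ring
  show l • fext (cm * p m) + mu • fext (cm * q m) ≤ fext (cm * (l • p + mu • q) m)
  rw [harg]
  exact h

/-- A nonnegative weighted sum of functions `η ↦ f (c m * η m)` with `c m > 0` is
concave on the nonnegative orthant; consequently, the objective
`η ↦ ∑ m, f (c m * η m)` of Problem 3 is concave on `{η : ∀ m, 0 ≤ η m ≤ 1}`. -/
theorem stmt_6 (M : ℕ) (c a : Fin M → ℝ) (hc : ∀ m, 0 < c m) (ha : ∀ m, 0 ≤ a m) :
    ConcaveOn ℝ {η : Fin M → ℝ | ∀ m, 0 ≤ η m}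
      (fun η => ∑ m, a m * fext (c m * η m)) ∧
    ConcaveOn ℝ {η : Fin M → ℝ | ∀ m, 0 ≤ η m ∧ η m ≤ 1}
      (fun η => ∑ m, fext (c m * η m)) := by
  have hS1 : Convex ℝ {η : Fin M → ℝ | ∀ m, 0 ≤ η m} := by
    intro p hp q hq l mu hl hmu hlm m
    have := hp m; have := hq m
    simp only [Pi.add_apply, Pi.smul_apply, smul_eq_mul]
    positivity
  have hS2 : Convex ℝ {η : Fin M → ℝ | ∀ m, 0 ≤ η m ∧ η m ≤ 1} := by
    intro p hp q hq l mu hl hmu hlm m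
    obtain ⟨h1, h2⟩ := hp m; obtain ⟨h3, h4⟩ := hq m
    simp only [Pi.add_apply, Pi.smul_apply, smul_eq_mul]
    constructor
    · positivity
    · nlinarith
  have key : ∀ (S : Set (Fin M → ℝ)), Convex ℝ S → (∀ η ∈ S, ∀ m, 0 ≤ η m) →
      ∀ (b : Fin M → ℝ), (∀ m, 0 ≤ b m) →
      ConcaveOn ℝ S (fun η => ∑ m, b m * fext (c m * η m)) := by
    intro S hS hSsub b hb
    exact concaveOn_finset_sum Finset.univ hS _
      (fun m _ => (term_concave hS hSsub (hc m) m).smul (hb m))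
  constructor
  · exact key _ hS1 (fun η hη => hη) a ha
  · have := key _ hS2 (fun η hη m => (hη m).1) (fun _ => 1) (fun _ => zero_le_one)
    simpa using this
end
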